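/- For any p' > p > 1, V(p) − V(p') < ln(p/(p−1)) − ln(p'/(p'−1)), where V(p) = p·ln(p²/(p²−1)). -/

import Mathlib

open Real Set

noncomputable def V (p : ℝ) : ℝ := p * Real.log (p ^ 2 / (p ^ 2 - 1))

noncomputable def g (x : ℝ) : ℝ :=
  2 * x * Real.log x - (x - 1) * Real.log (x - 1) - x * Real.log (x + 1) - Real.log x

lemma g_hasDeriv {x : ℝ} (hx : 1 < x) :
    HasDerivAt g (2 * Real.log x + 2 - (Real.log (x - 1) + 1)
      - (Real.log (x + 1) + x / (x + 1)) - 1 / x) x := by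
  have hx0 : x ≠ 0 := by linarith
  have hx1 : x - 1 ≠ 0 := by intro h; nlinarith [h]
  have hx1' : x + 1 ≠ 0 := by linarith
  have h1 : HasDerivAt (fun y : ℝ => 2 * y * Real.log y) (2 * Real.log x + 2) x := by
    have := ((hasDerivAt_id x).const_mul 2).mul (Real.hasDerivAt_log hx0)
    refine this.congr_deriv ?_
    field_simp
    simp only [id_eq]; ring
  have h2 : HasDerivAt (fun y : ℝ => (y - 1) * Real.log (y - 1)) (Real.log (x - 1) + 1) x := by
    have hs : HasDerivAt (fun y : ℝ => y - 1) 1 x := (hasDerivAt_id x).sub_const 1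
    have hl : HasDerivAt (fun y : ℝ => Real.log (y - 1)) (1 / (x - 1)) x := by
      have := (Real.hasDerivAt_log hx1).comp x hs
      simpa [Function.comp_def] using this
    have := hs.mul hl
    refine this.congr_deriv ?_
    field_simp
  have h3 : HasDerivAt (fun y : ℝ => y * Real.log (y + 1)) (Real.log (x + 1) + x / (x + 1)) x := by
    have hs : HasDerivAt (fun y : ℝ => y + 1) 1 x := (hasDerivAt_id x).add_const 1
    have hl : HasDerivAt (fun y : ℝ => Real.log (y + 1)) (1 / (x + 1)) x := by
      have := (Real.hasDerivAt_log hx1').comp x hs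
      simpa [Function.comp_def] using this
    have := (hasDerivAt_id x).mul hl
    refine this.congr_deriv ?_
    field_simp
    rfl
  have h4 : HasDerivAt Real.log (1 / x) x := by
    simpa [one_div] using Real.hasDerivAt_log hx0
  exact ((h1.sub h2).sub h3).sub h4

lemma g_deriv_pos {x : ℝ} (hx : 1 < x) :
    0 < 2 * Real.log x + 2 - (Real.log (x - 1) + 1)
      - (Real.log (x + 1) + x / (x + 1)) - 1 / x := by
  have hx0 : (0:ℝ) < x := by linarith
  have hx1 : (0:ℝ) < x - 1 := by linarith
  have hx1' : (0:ℝ) < x + 1 := by linarith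
  have hsq : (0:ℝ) < x ^ 2 - 1 := by nlinarith
  -- key: 2 log x - log(x-1) - log(x+1) > 1/x^2
  have hratio : (x ^ 2 - 1) / x ^ 2 ≠ 1 := by
    intro h
    have : x ^ 2 - 1 = x ^ 2 := by field_simp at h; exact h
    linarith
  have hratio0 : (0:ℝ) < (x ^ 2 - 1) / x ^ 2 := by positivity
  have hlog : Real.log ((x ^ 2 - 1) / x ^ 2) < (x ^ 2 - 1) / x ^ 2 - 1 :=
    Real.log_lt_sub_one_of_pos hratio0 hratio
  have hsplit : Real.log ((x ^ 2 - 1) / x ^ 2)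
      = Real.log (x - 1) + Real.log (x + 1) - 2 * Real.log x := by
    rw [Real.log_div (by nlinarith) (by positivity), show x ^ 2 - 1 = (x - 1) * (x + 1) by ring,
      Real.log_mul (ne_of_gt hx1) (ne_of_gt hx1'), Real.log_pow]
    push_cast; ring
  have key : 2 * Real.log x - Real.log (x - 1) - Real.log (x + 1) > 1 / x ^ 2 := by
    rw [hsplit] at hlog
    have : (x ^ 2 - 1) / x ^ 2 - 1 = -(1 / x ^ 2) := by field_simp; ring
    linarith [hlog.trans_eq this]
  have hrest : 1 / x ^ 2 + (2 - 1 - x / (x + 1) - 1 / x) > 0 := by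
    have : 2 - 1 - x / (x + 1) - 1 / x = 1 / (x + 1) - 1 / x := by field_simp; ring
    rw [this]
    have : 1 / x ^ 2 + (1 / (x + 1) - 1 / x) = 1 / x ^ 2 - 1 / (x * (x + 1)) := by
      field_simp; ring
    rw [this]
    have h1 : 1 / (x * (x + 1)) < 1 / x ^ 2 := by
      apply one_div_lt_one_div_of_lt
      · positivity
      · nlinarith
    linarith
  linarith

lemma g_strictMono : StrictMonoOn g (Ioi 1) := by
  apply strictMonoOn_of_deriv_pos (convex_Ioi 1)
  · exact fun x hx => (g_hasDeriv hx).continuousAt.continuousWithinAt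
  · intro x hx
    rw [interior_Ioi] at hx
    rw [(g_hasDeriv hx).deriv]
    exact g_deriv_pos hx

lemma V_eq {x : ℝ} (hx : 1 < x) : V x - Real.log (x / (x - 1)) = g x := by
  have hx0 : (0:ℝ) < x := by linarith
  have hx1 : (0:ℝ) < x - 1 := by linarith
  have hx1' : (0:ℝ) < x + 1 := by linarith
  unfold V g
  rw [Real.log_div (by positivity) (by nlinarith),
    Real.log_div (ne_of_gt hx0) (ne_of_gt hx1),
    show x ^ 2 - 1 = (x - 1) * (x + 1) by ring,
    Real.log_mul (ne_of_gt hx1) (ne_of_gt hx1'), Real.log_pow]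
  push_cast; ring

theorem stmt_4 (p p' : ℝ) (hp : 1 < p) (hpp' : p < p') :
    V p - V p' < Real.log (p / (p - 1)) - Real.log (p' / (p' - 1)) := by
  have hp' : 1 < p' := hp.trans hpp'
  have h := g_strictMono (mem_Ioi.mpr hp) (mem_Ioi.mpr hp') hpp'
  rw [← V_eq hp, ← V_eq hp'] at h
  linarith
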